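/- There exists a subset E of 2^ω × 2^ω which is the union of a closed set and an open set (i.e., the complement of a difference of two open sets), all of whose vertical sections E_x = {y : (x,y) ∈ E} are clopen in 2^ω, yet E is not a countable union of rectangles of the form F × U with F a closed subset of 2^ω and U an open subset of 2^ω. (One such set is E = (2^ω × {0^ω}) ∪ ∪_p (2^ω \ {ψ(p)}) × N_{0^p 1}, where ψ : ω → P_f is a bijection onto the set P_f of eventually-zero sequences and N_s denotes the basic clopen set of extensions of the finite sequence s.) -/

import Mathlib

open Filter Topology Set Classical

noncomputable section
open scoped Classical

/-- A set is Fσ if it is a countable union of closed sets. -/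
def IsFsigma {X : Type*} [TopologicalSpace X] (s : Set X) : Prop :=
  ∃ F : ℕ → Set X, (∀ n, IsClosed (F n)) ∧ s = ⋃ n, F n

/-- A function is Baire class one if the preimage of every open set is Fσ. -/
def BaireClassOneFn {X Y : Type*} [TopologicalSpace X] [TopologicalSpace Y] (f : X → Y) : Prop :=
  ∀ U : Set Y, IsOpen U → IsFsigma (f ⁻¹' U)

/-- A countable basis `(W m)` is good if for every open `U` and `x ∈ U` there is `m₀`
such that for all `m ≥ m₀`, `x ∈ W m` implies `W m ⊆ U`. -/
def IsGoodBasis {X : Type*} [TopologicalSpace X] (W : ℕ → Set X) : Prop :=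
  TopologicalSpace.IsTopologicalBasis (Set.range W) ∧
  ∀ U : Set X, IsOpen U → ∀ x ∈ U, ∃ m₀, ∀ m ≥ m₀, x ∈ W m → W m ⊆ U

/-- The path to `x` based on the dense sequence `D`, relative to the good basis `W`. -/
noncomputable def pathSeq {X : Type*} (W : ℕ → Set X) (D : ℕ → X) (x : X) : ℕ → X
  | 0 => D 0
  | n + 1 =>
    if x = pathSeq W D x n then pathSeq W D x n
    else D (sInf {p | ∃ m, x ∈ W m ∧ D p ∈ W m ∧ ∀ k, k ≤ n → pathSeq W D x k ∉ W m})
  termination_by n => n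
  decreasing_by all_goals omega

/-- `f` is recoverable with respect to `D` (and the good basis `W`). -/
def RecoverableWith {X Y : Type*} [TopologicalSpace Y] (W : ℕ → Set X) (D : ℕ → X)
    (f : X → Y) : Prop :=
  ∀ x : X, Tendsto (fun n => f (pathSeq W D x n)) atTop (𝓝 (f x))



namespace NotSigmaRectAux

/-- the all-zero sequence -/
def zeroSeq : ℕ → Bool := fun _ => false

/-- the basic clopen set N_{0^p 1} -/
def cyl (p : ℕ) : Set (ℕ → Bool) := {y | (∀ i < p, y i = false) ∧ y p = true}

/-- enumeration of eventually-zero sequences via binary digits -/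
def psi (p : ℕ) : ℕ → Bool := fun n => p.testBit n

lemma psi_inj : Function.Injective psi := fun a b h =>
  Nat.eq_of_testBit_eq fun i => congrFun h i

lemma isClopen_cyl (p : ℕ) : IsClopen (cyl p) := by
  have : cyl p = (⋂ i ∈ Finset.range p, (fun y : ℕ → Bool => y i) ⁻¹' {false}) ∩
      ((fun y : ℕ → Bool => y p) ⁻¹' {true}) := by
    ext y
    simp [cyl, Set.mem_iInter]
  rw [this]
  refine IsClopen.inter ?_ ((isClopen_discrete _).preimage (continuous_apply p))
  exact isClopen_biInter_finset fun i _ => (isClopen_discrete _).preimage (continuous_apply i)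

lemma zero_not_mem_cyl (p : ℕ) : zeroSeq ∉ cyl p := by
  intro h
  simpa [zeroSeq] using h.2

lemma cyl_eq {p q : ℕ} {y : ℕ → Bool} (hp : y ∈ cyl p) (hq : y ∈ cyl q) : p = q := by
  rcases lt_trichotomy p q with h | h | h
  · exact absurd (hq.1 p h) (by simp [hp.2])
  · exact h
  · exact absurd (hp.1 q h) (by simp [hq.2])

lemma exists_cyl {y : ℕ → Bool} (hy : y ≠ zeroSeq) : ∃ p, y ∈ cyl p := by
  have h : ∃ n, y n = true := by
    by_contra h
    push_neg at h
    exact hy (funext fun n => by simpa [zeroSeq] using Bool.eq_false_iff.mpr (h n))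
  refine ⟨Nat.find h, fun i hi => ?_, Nat.find_spec h⟩
  have := Nat.find_min h hi
  exact Bool.eq_false_iff.mpr this

/-- spike sequence: single `true` at position `p` -/
def spike (p : ℕ) : ℕ → Bool := fun n => decide (n = p)

lemma spike_mem_cyl (p : ℕ) : spike p ∈ cyl p := by
  constructor
  · intro i hi; simp [spike, Nat.ne_of_lt hi]
  · simp [spike]

lemma spike_tendsto : Tendsto spike atTop (𝓝 zeroSeq) := by
  rw [tendsto_pi_nhds]
  intro i
  refine Tendsto.congr' ?_ tendsto_const_nhds
  filter_upwards [eventually_gt_atTop i] with p hp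
  simp [spike, Nat.ne_of_lt hp, zeroSeq]

/-- prefix encoding -/
def num (x : ℕ → Bool) : ℕ → ℕ
  | 0 => 0
  | m + 1 => cond (x m) (2 ^ m + num x m) (num x m)

lemma num_lt (x : ℕ → Bool) : ∀ m, num x m < 2 ^ m := by
  intro m
  induction m with
  | zero => simp [num]
  | succ m ih =>
    cases h : x m <;> simp [num, h, pow_succ] <;> omega

lemma testBit_num (x : ℕ → Bool) : ∀ m j, (num x m).testBit j = (decide (j < m) && x j) := by
  intro m
  induction m with
  | zero => intro j; simp [num, Nat.testBit_lt_two_pow (show 0 < 2 ^ j from Nat.two_pow_pos j)]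
  | succ m ih =>
    intro j
    rcases lt_trichotomy j m with h | h | h
    · have hj : j < m + 1 := by omega
      cases hx : x m <;> simp [num, hx, Nat.testBit_two_pow_add_gt h, ih j, h, hj]
    · subst h
      cases hx : x j
      · simp [num, hx, ih j]
      · simp [num, hx, Nat.testBit_two_pow_add_eq, ih j]
    · have h1 : ¬ j < m + 1 := by omega
      have h2 : num x (m + 1) < 2 ^ j := lt_of_lt_of_le (num_lt x (m + 1))
        (Nat.pow_le_pow_right (by norm_num) (by omega))
      simp [Nat.testBit_lt_two_pow h2, h1]

/-- `pm x m` : a number ≥ 2^m whose binary digits agree with `x` below `m` -/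
def pm (x : ℕ → Bool) (m : ℕ) : ℕ := 2 ^ m + num x m

lemma psi_pm (x : ℕ → Bool) {m j : ℕ} (h : j < m) : psi (pm x m) j = x j := by
  simp [psi, pm, Nat.testBit_two_pow_add_gt h, testBit_num, h]

lemma pm_ge (x : ℕ → Bool) (m : ℕ) : m ≤ pm x m :=
  le_trans (Nat.lt_two_pow_self (n := m)).le (Nat.le_add_right _ _)

lemma psi_pm_tendsto (x : ℕ → Bool) : Tendsto (fun m => psi (pm x m)) atTop (𝓝 x) := by
  rw [tendsto_pi_nhds]
  intro j
  refine Tendsto.congr' ?_ tendsto_const_nhds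
  filter_upwards [eventually_gt_atTop j] with m hm
  exact (psi_pm x hm).symm

end NotSigmaRectAux

open NotSigmaRectAux

/-- There is a subset `E` of `2^ω × 2^ω` which is the union of a closed set and an open set,
all of whose vertical sections are clopen, but which is not a countable union of rectangles
`F × U` with `F` closed and `U` open. -/
theorem exists_closedUnionOpen_clopenSections_not_sigmaClosedOpenRectangles :
    ∃ E : Set ((ℕ → Bool) × (ℕ → Bool)),
      (∃ (C U : Set ((ℕ → Bool) × (ℕ → Bool))), IsClosed C ∧ IsOpen U ∧ E = C ∪ U) ∧
      (∀ x : ℕ → Bool, IsClopen {y | (x, y) ∈ E}) ∧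
      ¬ (∃ (F : ℕ → Set (ℕ → Bool)) (U : ℕ → Set (ℕ → Bool)),
          (∀ n, IsClosed (F n)) ∧ (∀ n, IsOpen (U n)) ∧ E = ⋃ n, F n ×ˢ U n) := by
  classical
  refine ⟨(Set.univ ×ˢ {zeroSeq}) ∪ ⋃ p, ({psi p}ᶜ ×ˢ cyl p), ?_, ?_, ?_⟩
  · exact ⟨Set.univ ×ˢ {zeroSeq}, ⋃ p, ({psi p}ᶜ ×ˢ cyl p),
      isClosed_univ.prod isClosed_singleton,
      isOpen_iUnion fun p => (isOpen_compl_singleton).prod (isClopen_cyl p).isOpen, rfl⟩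
  · intro x
    have hmem : ∀ y : ℕ → Bool,
        (x, y) ∈ (Set.univ ×ˢ {zeroSeq}) ∪ ⋃ p, ({psi p}ᶜ ×ˢ cyl p) ↔
        (y = zeroSeq ∨ ∃ p, x ≠ psi p ∧ y ∈ cyl p) := by
      intro y
      simp [Set.mem_prod, Set.mem_iUnion, eq_comm]
    by_cases h : ∃ q, psi q = x
    · obtain ⟨q, hq⟩ := h
      have : {y | (x, y) ∈ (Set.univ ×ˢ {zeroSeq}) ∪ ⋃ p, ({psi p}ᶜ ×ˢ cyl p)} = (cyl q)ᶜ := by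
        ext y
        rw [Set.mem_setOf_eq, hmem y]
        constructor
        · rintro (rfl | ⟨p, hp, hyp⟩)
          · exact zero_not_mem_cyl q
          · intro hyq
            exact hp (by rw [← hq, psi_inj.eq_iff]; exact (cyl_eq hyq hyp).symm ▸ rfl)
        · intro hy
          by_cases hyz : y = zeroSeq
          · exact Or.inl hyz
          · obtain ⟨p, hp⟩ := exists_cyl hyz
            refine Or.inr ⟨p, ?_, hp⟩
            intro hxp
            exact hy (by rw [psi_inj (hq.trans hxp)]; exact hp)
      rw [this]
      exact (isClopen_cyl q).compl
    · have : {y | (x, y) ∈ (Set.univ ×ˢ {zeroSeq}) ∪ ⋃ p, ({psi p}ᶜ ×ˢ cyl p)} = Set.univ := by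
        ext y
        rw [Set.mem_setOf_eq, hmem y]
        simp only [Set.mem_univ, iff_true]
        by_cases hyz : y = zeroSeq
        · exact Or.inl hyz
        · obtain ⟨p, hp⟩ := exists_cyl hyz
          exact Or.inr ⟨p, fun hx => h ⟨p, hx.symm⟩, hp⟩
      rw [this]
      exact isClopen_univ
  · rintro ⟨F, U, hF, hU, hE⟩
    -- the sections at y = zeroSeq cover everything
    have hcover : (⋃ n, (if zeroSeq ∈ U n then F n else (∅ : Set (ℕ → Bool)))) = Set.univ := by
      ext x
      simp only [Set.mem_iUnion, Set.mem_univ, iff_true]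
      have hx : (x, zeroSeq) ∈ ⋃ n, F n ×ˢ U n := by
        rw [← hE]; exact Or.inl ⟨Set.mem_univ x, rfl⟩
      obtain ⟨n, hn1, hn2⟩ := Set.mem_iUnion.mp hx
      exact ⟨n, by simp [hn2, hn1]⟩
    obtain ⟨n, hn⟩ := nonempty_interior_of_iUnion_of_closed
      (f := fun n => if zeroSeq ∈ U n then F n else ∅)
      (fun n => by show IsClosed (if zeroSeq ∈ U n then F n else ∅); split_ifs; exacts [hF n, isClosed_empty]) hcover
    by_cases hz : zeroSeq ∈ U n
    swap
    · rw [if_neg hz] at hn; simp at hn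
    rw [if_pos hz] at hn
    obtain ⟨x₀, hx₀⟩ := hn
    -- spikes eventually in U n
    obtain ⟨q, hq⟩ := eventually_atTop.mp
      (spike_tendsto.eventually_mem ((hU n).mem_nhds hz))
    -- psi (pm x₀ m) eventually in interior (F n)
    obtain ⟨m₁, hm₁⟩ := eventually_atTop.mp
      ((psi_pm_tendsto x₀).eventually_mem (isOpen_interior.mem_nhds hx₀))
    set p := pm x₀ (max m₁ q)
    have hpF : psi p ∈ F n := interior_subset (hm₁ _ (le_max_left _ _))
    have hpq : q ≤ p := le_trans (le_max_right m₁ q) (pm_ge x₀ _)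
    have hpU : spike p ∈ U n := hq p hpq
    have hpE : (psi p, spike p) ∈ ⋃ k, F k ×ˢ U k :=
      Set.mem_iUnion.mpr ⟨n, hpF, hpU⟩
    rw [← hE] at hpE
    rcases hpE with h1 | h2
    · have : spike p = zeroSeq := h1.2
      have := congrFun this p
      simp [spike, zeroSeq] at this
    · obtain ⟨k, hk1, hk2⟩ := Set.mem_iUnion.mp h2
      have hk : k = p := cyl_eq hk2 (spike_mem_cyl p)
      exact hk1 (by simp [hk])
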